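/- Let H be a bounded self-adjoint operator on ℓ²(ℤ) given by a discrete Schrödinger operator (Hφ)(n) = -φ(n-1) - φ(n+1) + V(n)φ(n) with bounded real potential V, and let E ∈ ℝ, δ > 0. Suppose there exist sequences aₖ → -∞ and bₖ → ∞ such that for every k, dist(E, spec H_{[aₖ,bₖ]}) ≥ δ, where H_{[a,b]} denotes the restriction of H to [a,b] with Dirichlet boundary conditions. Then dist(E, spec H) ≥ δ. -/

import Mathlib

open Filter

/-- The Dirichlet restriction of the discrete Schrödinger operator with potential `W`
to the interval `[a, b] ∩ ℤ`: tridiagonal matrix with diagonal `W` and off-diagonal `-1`. -/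
noncomputable def schrInt (W : ℤ → ℝ) (a b : ℤ) :
    Matrix (Finset.Icc a b) (Finset.Icc a b) ℝ :=
  fun i j => (if (i : ℤ) = (j : ℤ) then W i else 0) +
    (if (i : ℤ) = (j : ℤ) + 1 ∨ (j : ℤ) = (i : ℤ) + 1 then -1 else 0)

lemma matrix_lower_bound {n : Type*} [Fintype n] [DecidableEq n] {A : Matrix n n ℝ}
    (hA : A.IsHermitian) {E δ : ℝ} (hδ : 0 ≤ δ)
    (h : ∀ μ : ℝ, (∃ v : n → ℝ, v ≠ 0 ∧ A.mulVec v = μ • v) → δ ≤ |μ - E|)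
    (w : EuclideanSpace ℝ n) :
    δ ^ 2 * ∑ i, w i ^ 2 ≤ ∑ i, (A.mulVec w i - E * w i) ^ 2 := by
  classical
  set B := hA.eigenvectorBasis with hB
  set μ := hA.eigenvalues with hμ
  have hbound : ∀ i, δ ≤ |μ i - E| := fun i =>
    h (μ i) ⟨B i, fun h0 => B.orthonormal.ne_zero i (by ext j; simpa using congrFun h0 j),
      hA.mulVec_eigenvectorBasis i⟩
  -- the vector u = (A - E) w as an element of Euclidean space
  set u : EuclideanSpace ℝ n := WithLp.toLp 2 (fun i => A.mulVec w i - E * w i) with hu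
  have norm_sq_eq : ∀ y : EuclideanSpace ℝ n, ‖y‖ ^ 2 = ∑ i, y i ^ 2 := by
    intro y
    rw [EuclideanSpace.norm_eq, Real.sq_sqrt (by positivity)]
    simp [Real.norm_eq_abs, sq_abs]
  have key : ∀ i, B.repr u i = (μ i - E) * B.repr w i := by
    intro i
    have hsymm : ∀ p q, A p q = A q p := by
      intro p q
      conv_lhs => rw [← hA.eq]
      simp [Matrix.conjTranspose_apply]
    have hiu : (inner ℝ (B i) u : ℝ) = ∑ j, B i j * (A.mulVec w j - E * w j) := by
      simp [hu, PiLp.inner_apply, RCLike.inner_apply, mul_comm]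
    have hiw : (inner ℝ (B i) w : ℝ) = ∑ j, B i j * w j := by
      simp [PiLp.inner_apply, RCLike.inner_apply, mul_comm]
    have hswap : ∑ j, B i j * A.mulVec w j = ∑ j, A.mulVec (B i) j * w j := by
      simp only [Matrix.mulVec, dotProduct, Finset.mul_sum, Finset.sum_mul]
      rw [Finset.sum_comm]
      exact Finset.sum_congr rfl fun k _ => Finset.sum_congr rfl fun j _ => by
        rw [hsymm j k]; ring
    have heig : A.mulVec (B i) = μ i • ⇑(B i) := hA.mulVec_eigenvectorBasis i
    rw [B.repr_apply_apply, B.repr_apply_apply, hiu, hiw]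
    calc ∑ j, B i j * (A.mulVec w j - E * w j)
        = (∑ j, B i j * A.mulVec w j) - E * ∑ j, B i j * w j := by
          rw [Finset.mul_sum, ← Finset.sum_sub_distrib]
          exact Finset.sum_congr rfl fun j _ => by ring
      _ = (∑ j, A.mulVec (B i) j * w j) - E * ∑ j, B i j * w j := by rw [hswap]
      _ = μ i * (∑ j, B i j * w j) - E * ∑ j, B i j * w j := by
          rw [heig]
          simp only [Pi.smul_apply, smul_eq_mul, Finset.mul_sum]
          congr 1 <;> exact Finset.sum_congr rfl fun j _ => by ring
      _ = (μ i - E) * ∑ j, B i j * w j := by ring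
  have hnu : ‖u‖ ^ 2 = ∑ i, ((μ i - E) * B.repr w i) ^ 2 := by
    rw [← B.repr.norm_map u, norm_sq_eq (B.repr u)]
    exact Finset.sum_congr rfl fun i _ => by rw [key i]
  have hnw : ‖w‖ ^ 2 = ∑ i, (B.repr w i) ^ 2 := by
    rw [← B.repr.norm_map w, norm_sq_eq (B.repr w)]
  calc δ ^ 2 * ∑ i, w i ^ 2 = δ ^ 2 * ‖w‖ ^ 2 := by rw [norm_sq_eq w]
    _ = ∑ i, δ ^ 2 * (B.repr w i) ^ 2 := by rw [hnw, Finset.mul_sum]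
    _ ≤ ∑ i, ((μ i - E) * B.repr w i) ^ 2 := by
        apply Finset.sum_le_sum
        intro i _
        rw [mul_pow]
        apply mul_le_mul_of_nonneg_right _ (sq_nonneg _)
        have := hbound i
        calc δ ^ 2 ≤ |μ i - E| ^ 2 := by nlinarith [abs_nonneg (μ i - E)]
          _ = (μ i - E) ^ 2 := sq_abs _
    _ = ‖u‖ ^ 2 := hnu.symm
    _ = ∑ i, (A.mulVec w i - E * w i) ^ 2 := norm_sq_eq u

lemma schrInt_isHermitian (W : ℤ → ℝ) (a b : ℤ) : (schrInt W a b).IsHermitian := by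
  ext i j
  simp only [Matrix.conjTranspose_apply, schrInt, star_trivial]
  congr 1
  · by_cases h : (i : ℤ) = (j : ℤ)
    · rw [if_pos h, if_pos h.symm]
      have : i = j := Subtype.ext h
      rw [this]
    · rw [if_neg h, if_neg (fun hh => h hh.symm)]
  · exact if_congr or_comm rfl rfl

lemma schrInt_mulVec (W : ℤ → ℝ) (a b : ℤ) (g : ℤ → ℝ)
    (hg : ∀ n : ℤ, n ∉ Finset.Icc a b → g n = 0) (i : ℤ) (hi : i ∈ Finset.Icc a b) :
    (schrInt W a b).mulVec (fun j => g (j : ℤ)) ⟨i, hi⟩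
      = -g (i - 1) - g (i + 1) + W i * g i := by
  classical
  have expand : (schrInt W a b).mulVec (fun j => g (j : ℤ)) ⟨i, hi⟩
      = ∑ j ∈ Finset.Icc a b, ((if i = j then W i else 0)
          + (if i = j + 1 ∨ j = i + 1 then -1 else 0)) * g j := by
    rw [Matrix.mulVec, dotProduct]
    rw [← Finset.sum_coe_sort (Finset.Icc a b)
      (fun j => ((if i = j then W i else 0) + (if i = j + 1 ∨ j = i + 1 then -1 else 0)) * g j)]
    rfl
  rw [expand]
  have split : ∀ j ∈ Finset.Icc a b,
      ((if i = j then W i else 0) + (if i = j + 1 ∨ j = i + 1 then -1 else 0)) * g j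
      = (if j = i then W i * g i else 0)
        + ((if j = i - 1 then -g (i-1) else 0) + (if j = i + 1 then -g (i+1) else 0)) := by
    intro j _
    rcases eq_or_ne j i with h1 | h1
    · subst h1
      rw [if_pos rfl, if_neg (by omega), if_pos rfl, if_neg (by omega), if_neg (by omega)]
      ring
    · rcases eq_or_ne j (i - 1) with h2 | h2
      · subst h2
        rw [if_neg (by omega), if_pos (by omega), if_neg (by omega), if_pos rfl,
          if_neg (by omega)]
        ring
      · rcases eq_or_ne j (i + 1) with h3 | h3
        · subst h3
          rw [if_neg (by omega), if_pos (by omega), if_neg (by omega), if_neg (by omega),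
            if_pos rfl]
          ring
        · rw [if_neg (by omega), if_neg (by omega), if_neg (by omega), if_neg (by omega),
            if_neg (by omega)]
          ring
  rw [Finset.sum_congr rfl split]
  rw [Finset.sum_add_distrib, Finset.sum_add_distrib,
    Finset.sum_ite_eq' (Finset.Icc a b) i, Finset.sum_ite_eq' (Finset.Icc a b) (i-1),
    Finset.sum_ite_eq' (Finset.Icc a b) (i+1)]
  rw [if_pos hi]
  have e1 : (if i - 1 ∈ Finset.Icc a b then -g (i-1) else 0) = -g (i-1) := by
    split
    · rfl
    · rename_i h; rw [hg _ h, neg_zero]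
  have e2 : (if i + 1 ∈ Finset.Icc a b then -g (i+1) else 0) = -g (i+1) := by
    split
    · rfl
    · rename_i h; rw [hg _ h, neg_zero]
  rw [e1, e2]; ring

lemma real_bound (W : ℤ → ℝ) (a b : ℤ) {E δ : ℝ} (hδ : 0 ≤ δ)
    (h : ∀ μ : ℝ, (∃ v : (Finset.Icc a b) → ℝ, v ≠ 0 ∧
      (schrInt W a b).mulVec v = μ • v) → δ ≤ |μ - E|)
    (g : ℤ → ℝ) (hg : ∀ n : ℤ, n ∉ Finset.Icc a b → g n = 0) :
    δ ^ 2 * ∑ i ∈ Finset.Icc a b, g i ^ 2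
      ≤ ∑ i ∈ Finset.Icc a b, ((-g (i-1) - g (i+1) + W i * g i) - E * g i) ^ 2 := by
  classical
  set s := Finset.Icc a b with hs
  set A := schrInt W a b with hA'
  have hA := schrInt_isHermitian W a b
  have hb := matrix_lower_bound hA hδ h (WithLp.toLp 2 (fun j : s => g (j : ℤ)) : EuclideanSpace ℝ s)
  have l1 : (∑ i : s, g (i : ℤ) ^ 2) = ∑ i ∈ s, g i ^ 2 :=
    Finset.sum_coe_sort s (fun i => g i ^ 2)
  have l2 : (∑ i : s, (A.mulVec (fun j => g (j : ℤ)) i - E * g (i : ℤ)) ^ 2)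
      = ∑ i ∈ s, ((-g (i-1) - g (i+1) + W i * g i) - E * g i) ^ 2 := by
    rw [← Finset.sum_coe_sort s (fun i => ((-g (i-1) - g (i+1) + W i * g i) - E * g i) ^ 2)]
    refine Finset.sum_congr rfl fun i _ => ?_
    rw [show A.mulVec (fun j => g (j : ℤ)) i = -g ((i:ℤ)-1) - g ((i:ℤ)+1) + W i * g i from
      schrInt_mulVec W a b g hg (i : ℤ) i.2]
  rw [← l1, ← l2]
  exact hb

lemma complex_bound (W : ℤ → ℝ) (a b : ℤ) {E δ : ℝ} (hδ : 0 ≤ δ)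
    (h : ∀ μ : ℝ, (∃ v : (Finset.Icc a b) → ℝ, v ≠ 0 ∧
      (schrInt W a b).mulVec v = μ • v) → δ ≤ |μ - E|)
    (φ : ℤ → ℂ) (hφ : ∀ n : ℤ, n ∉ Finset.Icc a b → φ n = 0) :
    δ ^ 2 * ∑ i ∈ Finset.Icc a b, ‖φ i‖ ^ 2
      ≤ ∑ i ∈ Finset.Icc a b, ‖(-φ (i-1) - φ (i+1) + W i * φ i) - E * φ i‖ ^ 2 := by
  classical
  set s := Finset.Icc a b with hs
  set gr : ℤ → ℝ := fun n => (φ n).re with hgr'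
  set gi : ℤ → ℝ := fun n => (φ n).im with hgi'
  have hgr : ∀ n : ℤ, n ∉ s → gr n = 0 := fun n hn => by simp [hgr', hφ n hn]
  have hgi : ∀ n : ℤ, n ∉ s → gi n = 0 := fun n hn => by simp [hgi', hφ n hn]
  have h1 := real_bound W a b hδ h gr hgr
  have h2 := real_bound W a b hδ h gi hgi
  have e1 : ∀ i : ℤ, ‖φ i‖ ^ 2 = gr i ^ 2 + gi i ^ 2 := by
    intro i
    rw [Complex.sq_norm, Complex.normSq_apply]
    simp [hgr', hgi']; ring
  have e2 : ∀ i : ℤ, ‖(-φ (i-1) - φ (i+1) + W i * φ i) - E * φ i‖ ^ 2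
      = ((-gr (i-1) - gr (i+1) + W i * gr i) - E * gr i) ^ 2
        + ((-gi (i-1) - gi (i+1) + W i * gi i) - E * gi i) ^ 2 := by
    intro i
    rw [Complex.sq_norm, Complex.normSq_apply]
    simp [hgr', hgi', Complex.sub_re, Complex.add_re, Complex.neg_re, Complex.mul_re,
      Complex.sub_im, Complex.add_im, Complex.neg_im, Complex.mul_im]
    ring
  rw [Finset.sum_congr rfl fun i _ => e1 i, Finset.sum_congr rfl fun i _ => e2 i,
    Finset.sum_add_distrib, Finset.sum_add_distrib, mul_add]
  exact add_le_add h1 h2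

lemma lp_norm_sq (f : lp (fun _ : ℤ => ℂ) 2) :
    ‖f‖ ^ 2 = ∑' n : ℤ, ‖(f : ℤ → ℂ) n‖ ^ 2 := by
  have h := lp.norm_rpow_eq_tsum (p := 2) (by norm_num) f
  have e : ∀ x : ℝ, x ^ ((2:ENNReal)).toReal = x ^ 2 := fun x => by
    rw [show ((2:ENNReal)).toReal = ((2:ℕ):ℝ) by norm_num, Real.rpow_natCast]
  rw [e] at h
  simp only [e] at h
  exact h

lemma lp_summable_sq (f : lp (fun _ : ℤ => ℂ) 2) :
    Summable (fun n : ℤ => ‖(f : ℤ → ℂ) n‖ ^ 2) := by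
  have h := (lp.memℓp f).summable (p := 2) (by norm_num)
  have e : ∀ x : ℝ, x ^ ((2:ENNReal)).toReal = x ^ 2 := fun x => by
    rw [show ((2:ENNReal)).toReal = ((2:ℕ):ℝ) by norm_num, Real.rpow_natCast]
  simpa only [e] using h

lemma lp_bound (V : ℤ → ℝ)
    (H : lp (fun _ : ℤ => ℂ) 2 →L[ℂ] lp (fun _ : ℤ => ℂ) 2)
    (hH : ∀ φ : lp (fun _ : ℤ => ℂ) 2, ∀ n : ℤ,
      (H φ : ℤ → ℂ) n = -(φ : ℤ → ℂ) (n - 1) - (φ : ℤ → ℂ) (n + 1) + V n * (φ : ℤ → ℂ) n)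
    {E δ : ℝ} (hδ : 0 ≤ δ) (a b : ℤ)
    (h : ∀ μ : ℝ, (∃ v : (Finset.Icc a b) → ℝ, v ≠ 0 ∧
      (schrInt V a b).mulVec v = μ • v) → δ ≤ |μ - E|)
    (ψ : lp (fun _ : ℤ => ℂ) 2) (hψ : ∀ n : ℤ, n ∉ Finset.Icc a b → (ψ : ℤ → ℂ) n = 0) :
    δ * ‖ψ‖ ≤ ‖H ψ - (E : ℂ) • ψ‖ := by
  classical
  set s := Finset.Icc a b with hs
  set w := H ψ - (E : ℂ) • ψ with hw'
  have hw : ∀ n : ℤ, (w : ℤ → ℂ) n = (H ψ : ℤ → ℂ) n - (E : ℂ) * (ψ : ℤ → ℂ) n := by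
    intro n
    rw [hw', lp.coeFn_sub, Pi.sub_apply, lp.coeFn_smul, Pi.smul_apply, smul_eq_mul]
  have hnψ : ‖ψ‖ ^ 2 = ∑ i ∈ s, ‖(ψ : ℤ → ℂ) i‖ ^ 2 := by
    rw [lp_norm_sq ψ]
    exact tsum_eq_sum (fun n hn => by rw [hψ n hn, norm_zero]; norm_num)
  have hnw : ∑ i ∈ s, ‖(w : ℤ → ℂ) i‖ ^ 2 ≤ ‖w‖ ^ 2 := by
    rw [lp_norm_sq w]
    exact Summable.sum_le_tsum s (fun n _ => by positivity) (lp_summable_sq w)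
  have key : δ ^ 2 * ‖ψ‖ ^ 2 ≤ ‖w‖ ^ 2 := by
    have hcb := complex_bound V a b hδ h (ψ : ℤ → ℂ) hψ
    have heq : ∀ i ∈ s, ‖(w : ℤ → ℂ) i‖ ^ 2
        = ‖(-(ψ : ℤ → ℂ) (i-1) - (ψ : ℤ → ℂ) (i+1) + V i * (ψ : ℤ → ℂ) i)
            - (E : ℂ) * (ψ : ℤ → ℂ) i‖ ^ 2 := by
      intro i _
      rw [hw i, hH ψ i]
    calc δ ^ 2 * ‖ψ‖ ^ 2 = δ ^ 2 * ∑ i ∈ s, ‖(ψ : ℤ → ℂ) i‖ ^ 2 := by rw [hnψ]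
      _ ≤ ∑ i ∈ s, ‖(-(ψ : ℤ → ℂ) (i-1) - (ψ : ℤ → ℂ) (i+1) + V i * (ψ : ℤ → ℂ) i)
            - (E : ℂ) * (ψ : ℤ → ℂ) i‖ ^ 2 := hcb
      _ = ∑ i ∈ s, ‖(w : ℤ → ℂ) i‖ ^ 2 := (Finset.sum_congr rfl heq).symm
      _ ≤ ‖w‖ ^ 2 := hnw
  have h1 : (δ * ‖ψ‖) ^ 2 ≤ ‖w‖ ^ 2 := by rw [mul_pow]; exact key
  calc δ * ‖ψ‖ = Real.sqrt ((δ * ‖ψ‖) ^ 2) := (Real.sqrt_sq (by positivity)).symm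
    _ ≤ Real.sqrt (‖w‖ ^ 2) := Real.sqrt_le_sqrt h1
    _ = ‖w‖ := Real.sqrt_sq (norm_nonneg _)

set_option maxHeartbeats 1000000 in
/-- if `dist(E, spec H_{[aₖ,bₖ]}) ≥ δ` along exhausting intervals, then
`dist(E, spec H) ≥ δ` for the full-line discrete Schrödinger operator `H` on `ℓ²(ℤ)`. -/
theorem dist_spectrum_of_dist_finite_spectra
    (V : ℤ → ℝ) (M : ℝ) (hV : ∀ n, |V n| ≤ M)
    (H : lp (fun _ : ℤ => ℂ) 2 →L[ℂ] lp (fun _ : ℤ => ℂ) 2)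
    (hH : ∀ φ : lp (fun _ : ℤ => ℂ) 2, ∀ n : ℤ,
      (H φ : ℤ → ℂ) n = -(φ : ℤ → ℂ) (n - 1) - (φ : ℤ → ℂ) (n + 1) + V n * (φ : ℤ → ℂ) n)
    (hsa : IsSelfAdjoint H)
    (E δ : ℝ) (hδ : 0 < δ)
    (a b : ℕ → ℤ)
    (ha : Tendsto a atTop atBot) (hb : Tendsto b atTop atTop)
    (hfin : ∀ k : ℕ, ∀ μ : ℝ,
      (∃ v : (Finset.Icc (a k) (b k)) → ℝ, v ≠ 0 ∧
        (schrInt V (a k) (b k)).mulVec v = μ • v) → δ ≤ |μ - E|) :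
    ∀ z ∈ spectrum ℂ H, δ ≤ ‖z - (E : ℂ)‖ := by
  classical
  intro z hz
  by_contra hcon
  push_neg at hcon
  have hzre : z = (z.re : ℂ) := hsa.mem_spectrum_eq_re hz
  set x : ℝ := z.re with hxdef
  have hx : |x - E| < δ := by
    have hne : ‖z - (E : ℂ)‖ = |x - E| := by
      rw [hzre, ← Complex.ofReal_sub, Complex.norm_real, Real.norm_eq_abs]
    rw [hne] at hcon
    exact hcon
  set c : ℝ := δ - |x - E| with hcdef
  have hc0 : 0 < c := by simp only [hcdef]; linarith
  set T : lp (fun _ : ℤ => ℂ) 2 →L[ℂ] lp (fun _ : ℤ => ℂ) 2 := H - z • 1 with hTdef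
  have hTφ : ∀ φ, T φ = H φ - z • φ := fun φ => rfl
  -- Step A: the bound on finitely supported vectors
  have stepA : ∀ (s : Finset ℤ) (φ : lp (fun _ : ℤ => ℂ) 2),
      (∀ n : ℤ, n ∉ s → (φ : ℤ → ℂ) n = 0) → c * ‖φ‖ ≤ ‖T φ‖ := by
    intro s φ hφ
    rcases s.eq_empty_or_nonempty with rfl | hs
    · have hz0 : φ = 0 := by
        ext n
        exact hφ n (Finset.notMem_empty n)
      simp [hz0]
    · obtain ⟨k, hk1, hk2⟩ :=
        ((ha.eventually_le_atBot (s.min' hs)).and (hb.eventually_ge_atTop (s.max' hs))).exists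
      have hsupp : ∀ n : ℤ, n ∉ Finset.Icc (a k) (b k) → (φ : ℤ → ℂ) n = 0 := by
        intro n hn
        by_cases hns : n ∈ s
        · exfalso
          apply hn
          rw [Finset.mem_Icc]
          exact ⟨le_trans hk1 (s.min'_le n hns), le_trans (s.le_max' n hns) hk2⟩
        · exact hφ n hns
      have hδφ : δ * ‖φ‖ ≤ ‖H φ - (E : ℂ) • φ‖ :=
        lp_bound V H hH hδ.le (a k) (b k) (hfin k) φ hsupp
      have hsplit : T φ = (H φ - (E : ℂ) • φ) - ((x - E : ℝ) : ℂ) • φ := by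
        rw [hTφ φ]
        rw [hzre]
        push_cast
        module
      calc c * ‖φ‖ = δ * ‖φ‖ - |x - E| * ‖φ‖ := by rw [hcdef]; ring
        _ ≤ ‖H φ - (E : ℂ) • φ‖ - ‖((x - E : ℝ) : ℂ) • φ‖ := by
            apply sub_le_sub hδφ
            rw [norm_smul, Complex.norm_real, Real.norm_eq_abs]
        _ ≤ ‖(H φ - (E : ℂ) • φ) - ((x - E : ℝ) : ℂ) • φ‖ := norm_sub_norm_le _ _
        _ = ‖T φ‖ := by rw [hsplit]
  -- Step B: extend to all vectors by density
  have bound : ∀ φ, c * ‖φ‖ ≤ ‖T φ‖ := by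
    intro φ
    have hS : IsClosed {ψ : lp (fun _ : ℤ => ℂ) 2 | c * ‖ψ‖ ≤ ‖T ψ‖} :=
      isClosed_le (continuous_const.mul continuous_norm) (T.continuous.norm)
    have hsum : HasSum (fun i : ℤ => lp.single 2 i ((φ : ℤ → ℂ) i)) φ :=
      lp.hasSum_single (by norm_num) φ
    refine hS.mem_of_tendsto hsum (Filter.Eventually.of_forall ?_)
    intro s
    refine stepA s _ ?_
    intro n hn
    rw [lp.coeFn_sum, Finset.sum_apply]
    apply Finset.sum_eq_zero
    intro i hi
    exact lp.single_apply_ne 2 i _ (fun hni => hn (hni ▸ hi))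
  -- bounded below, hence antilipschitz
  have hbdd : ∀ φ, ‖φ‖ ≤ (⟨c⁻¹, by positivity⟩ : NNReal) * ‖T φ‖ := by
    intro φ
    have := bound φ
    calc ‖φ‖ = c⁻¹ * (c * ‖φ‖) := by field_simp
      _ ≤ c⁻¹ * ‖T φ‖ := by
          apply mul_le_mul_of_nonneg_left this (by positivity)
  have hanti := T.antilipschitz_of_bound hbdd
  have hinj : Function.Injective T := hanti.injective
  have hclosed : IsClosed (Set.range T) := hanti.isClosed_range T.uniformContinuous
  -- T is self-adjoint
  have hTsa : IsSelfAdjoint T := by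
    rw [hTdef]
    refine hsa.sub ?_
    rw [IsSelfAdjoint, star_smul, star_one]
    congr 1
    rw [hzre]
    exact Complex.conj_ofReal x
  have hadj : ContinuousLinearMap.adjoint T = T := by
    rw [← ContinuousLinearMap.star_eq_adjoint]
    exact hTsa
  -- range is everything
  have hrange : LinearMap.range (T : lp (fun _ : ℤ => ℂ) 2 →ₗ[ℂ] lp (fun _ : ℤ => ℂ) 2) = ⊤ := by
    set R : Submodule ℂ (lp (fun _ : ℤ => ℂ) 2) :=
      LinearMap.range (T : lp (fun _ : ℤ => ℂ) 2 →ₗ[ℂ] lp (fun _ : ℤ => ℂ) 2) with hR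
    have hRc : IsClosed (R : Set (lp (fun _ : ℤ => ℂ) 2)) := by
      rw [hR]
      exact hclosed
    haveI : CompleteSpace R := hRc.completeSpace_coe
    rw [← Submodule.orthogonal_eq_bot_iff, Submodule.eq_bot_iff]
    intro y hy
    have h1 : ∀ φ, (inner ℂ (T φ) y : ℂ) = 0 := fun φ =>
      (Submodule.mem_orthogonal R y).1 hy _ (LinearMap.mem_range_self _ φ)
    have h2 : ∀ φ, (inner ℂ φ (T y) : ℂ) = 0 := by
      intro φ
      rw [← hadj, ContinuousLinearMap.adjoint_inner_right]
      exact h1 φ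
    have hTy : T y = 0 := by
      have := h2 (T y)
      rwa [inner_self_eq_zero] at this
    have hby := bound y
    rw [hTy, norm_zero] at hby
    have hy0 : ‖y‖ ≤ 0 := by nlinarith [norm_nonneg y]
    exact norm_le_zero_iff.mp hy0
  have hbij : Function.Bijective T :=
    ⟨hinj, LinearMap.range_eq_top.mp hrange⟩
  have hunit : IsUnit T := ContinuousLinearMap.isUnit_iff_bijective.mpr hbij
  have hnot : z ∉ spectrum ℂ H := by
    rw [spectrum.notMem_iff]
    have heq : algebraMap ℂ (lp (fun _ : ℤ => ℂ) 2 →L[ℂ] lp (fun _ : ℤ => ℂ) 2) z - H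
        = -T := by
      rw [Algebra.algebraMap_eq_smul_one, hTdef, neg_sub]
    rw [heq]
    exact hunit.neg
  exact hnot hz
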